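/- Let $\bar{p} = (p_1,p_2,p_3)$ be a triple of integers. The circle action $z \cdot g = \mathrm{diag}(z^{p_1},z^{p_2},z^{p_3}) \, g \, \mathrm{diag}(1,1,\bar{z}^{p_1+p_2+p_3})$ satisfies the Eschenburg freeness condition (for every permutation $\sigma$, $\gcd(a_1 - b_{\sigma(1)}, a_2 - b_{\sigma(2)}) = 1$ with $\bar{a} = \bar{p}$ and $\bar{b} = (0,0,p_1+p_2+p_3)$) if and only if $\gcd(p_i, p_j) = 1$ for all $i \neq j$. -/

import Mathlib

lemma esch_aux1 (a b c : ℤ) : Int.gcd a (b - (a + b + c)) = 1 ↔ Int.gcd a c = 1 := by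
  rw [← Int.isCoprime_iff_gcd_eq_one, ← Int.isCoprime_iff_gcd_eq_one,
    show b - (a + b + c) = -c + a * (-1) by ring,
    IsCoprime.add_mul_left_right_iff, IsCoprime.neg_right_iff]

lemma esch_aux2 (a b c : ℤ) : Int.gcd (a - (a + b + c)) b = 1 ↔ Int.gcd b c = 1 := by
  rw [← Int.isCoprime_iff_gcd_eq_one, ← Int.isCoprime_iff_gcd_eq_one, isCoprime_comm,
    show a - (a + b + c) = -c + b * (-1) by ring,
    IsCoprime.add_mul_left_right_iff, IsCoprime.neg_right_iff]

theorem eschenburg_free_iff_pairwise_coprime (p₁ p₂ p₃ : ℤ) :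
    (∀ σ : Equiv.Perm (Fin 3),
      Int.gcd (![p₁, p₂, p₃] 0 - ![0, 0, p₁ + p₂ + p₃] (σ 0))
              (![p₁, p₂, p₃] 1 - ![0, 0, p₁ + p₂ + p₃] (σ 1)) = 1) ↔
    (∀ i j : Fin 3, i ≠ j → Int.gcd (![p₁, p₂, p₃] i) (![p₁, p₂, p₃] j) = 1) := by
  constructor
  · intro h i j hij
    have e12 := h 1
    have e13 := h (Equiv.swap 1 2)
    have e23 := h (Equiv.swap 0 2)
    simp [Equiv.swap_apply_def] at e12 e13 e23
    rw [esch_aux1] at e13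
    rw [esch_aux2] at e23
    fin_cases i <;> fin_cases j <;>
      simp_all [Int.gcd_comm p₂ p₁, Int.gcd_comm p₃ p₁, Int.gcd_comm p₃ p₂]
  · intro h σ
    have e12 : Int.gcd p₁ p₂ = 1 := by simpa using h 0 1 (by decide)
    have e13 : Int.gcd p₁ p₃ = 1 := by simpa using h 0 2 (by decide)
    have e23 : Int.gcd p₂ p₃ = 1 := by simpa using h 1 2 (by decide)
    have hxy : σ 0 ≠ σ 1 := σ.injective.ne (by decide)
    generalize σ 0 = x at hxy ⊢; generalize σ 1 = y at hxy ⊢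
    fin_cases x <;> fin_cases y <;> simp at hxy ⊢ <;>
      simp [esch_aux1, esch_aux2, e12, e13, e23]
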